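/- Let ℓ_{w,p} be a strictly monotone Lorentz sequence space (1 < p < ∞, w_k > 0 for all k). Suppose Y = ker f is the range of a norm-one projection on ℓ_{w,p} where f = f_i e_i* + f_j e_j* with i ≠ j and f_i, f_j ≠ 0. Then either |f_i| = |f_j|, or w_k = 1 for all k (i.e., ℓ_{w,p} = ℓ_p isometrically). -/

import Mathlib

open ENNReal

/-- `Σₙ wₙ (xₙ*)ᵖ` for the Lorentz space `ℓ_{w,p}`, expressed as the supremum
over injections (valid for nonincreasing nonnegative weights). -/
noncomputable def lorentzSum (w : ℕ → ℝ) (p : ℝ) (x : ℕ → ℝ) : ℝ≥0∞ :=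
  ⨆ π : {g : ℕ → ℕ // Function.Injective g},
    ∑' n, ENNReal.ofReal (w n * |x (π.1 n)| ^ p)

open Filter

lemma sum_antitone_le (u : ℕ → ℝ≥0∞) (hu : Antitone u) (T : Finset ℕ) :
    ∑ n ∈ T, u n ≤ ∑ n ∈ Finset.range T.card, u n := by
  classical
  have e := T.orderIsoOfFin (rfl : T.card = T.card)
  have hle : ∀ l : Fin T.card, (l : ℕ) ≤ (e l : ℕ) := by
    have : ∀ (m : ℕ) (h : m < T.card), m ≤ (e ⟨m, h⟩ : ℕ) := by
      intro m
      induction m with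
      | zero => intro h; exact Nat.zero_le _
      | succ k ih =>
        intro h
        have hk : k < T.card := Nat.lt_of_succ_lt h
        have hlt : ((e ⟨k, hk⟩ : ℕ)) < ((e ⟨k+1, h⟩ : ℕ)) := by
          have := e.strictMono (show (⟨k, hk⟩ : Fin T.card) < ⟨k+1, h⟩ by
            simp [Fin.lt_def])
          exact this
        exact Nat.succ_le_of_lt (lt_of_le_of_lt (ih hk) hlt)
    intro l
    simpa using this l.1 l.2
  have h1 : ∑ n ∈ T, u n = ∑ l : Fin T.card, u (e l) := by
    rw [← Finset.sum_coe_sort T u]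
    exact (Equiv.sum_comp e.toEquiv (fun x => u x)).symm
  rw [h1, ← Fin.sum_univ_eq_sum_range (fun n => u n) T.card]
  exact Finset.sum_le_sum fun l _ => hu (hle l)

lemma rearrange_le (u b : ℕ → ℝ≥0∞) (hu : Antitone u) (hb : Antitone b)
    (M : ℕ) (hbM : ∀ n, M ≤ n → b n = 0) (τ : ℕ → ℕ) (hτ : Function.Injective τ) :
    (∑' n, u n * b (τ n)) ≤ ∑' n, u n * b n := by
  classical
  -- telescoping decomposition of b
  have tel : ∀ N n, n ≤ N → ∑ k ∈ Finset.Ico n N, (b k - b (k+1)) = b n - b N := by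
    intro N
    induction N with
    | zero => intro n hn; simp_all
    | succ N ih =>
      intro n hn
      rcases Nat.lt_or_ge n (N+1) with h | h
      · have hnN : n ≤ N := Nat.lt_succ_iff.mp h
        rw [Finset.sum_Ico_succ_top hnN, ih n hnN]
        exact tsub_add_tsub_cancel (hb hnN) (hb (Nat.le_succ N))
      · have : n = N + 1 := le_antisymm hn h
        subst this; simp
  have hD : ∀ n, b n = ∑' k, if n ≤ k then b k - b (k+1) else 0 := by
    intro n
    have hsupp : ∀ k ∉ Finset.Ico n M, (if n ≤ k then b k - b (k+1) else 0) = 0 := by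
      intro k hk
      rw [Finset.mem_Ico] at hk
      by_cases h : n ≤ k
      · have hM : M ≤ k := by omega
        simp [h, hbM k hM, hbM (k+1) (le_trans hM (Nat.le_succ k))]
      · simp [h]
    rw [tsum_eq_sum hsupp]
    rcases le_or_gt M n with h | h
    · rw [hbM n h]
      have : Finset.Ico n M = ∅ := by
        rw [Finset.Ico_eq_empty_iff]; omega
      simp [this]
    · have : ∑ k ∈ Finset.Ico n M, (if n ≤ k then b k - b (k+1) else 0)
          = ∑ k ∈ Finset.Ico n M, (b k - b (k+1)) := by
        apply Finset.sum_congr rfl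
        intro k hk
        rw [Finset.mem_Ico] at hk
        simp [hk.1]
      rw [this, tel M n h.le, hbM M le_rfl, tsub_zero]
  -- key identity, valid for any σ
  have key : ∀ σ : ℕ → ℕ, (∑' n, u n * b (σ n))
      = ∑' k, (b k - b (k+1)) * ∑' n, (if σ n ≤ k then u n else 0) := by
    intro σ
    calc ∑' n, u n * b (σ n)
        = ∑' n, ∑' k, (if σ n ≤ k then u n * (b k - b (k+1)) else 0) := by
          apply tsum_congr; intro n
          rw [hD (σ n), ← ENNReal.tsum_mul_left]
          apply tsum_congr; intro k
          by_cases h : σ n ≤ k <;> simp [h]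
      _ = ∑' k, ∑' n, (if σ n ≤ k then u n * (b k - b (k+1)) else 0) := ENNReal.tsum_comm
      _ = ∑' k, (b k - b (k+1)) * ∑' n, (if σ n ≤ k then u n else 0) := by
          apply tsum_congr; intro k
          rw [← ENNReal.tsum_mul_left]
          apply tsum_congr; intro n
          by_cases h : σ n ≤ k <;> simp [h, mul_comm]
  have k2 := key id
  simp only [id_eq] at k2
  rw [key τ, k2]
  apply Summable.tsum_le_tsum _ ENNReal.summable ENNReal.summable
  intro k
  apply mul_le_mul_right
  -- inner inequality
  have hinj : Set.InjOn τ (τ ⁻¹' ↑(Finset.range (k+1))) := hτ.injOn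
  set Tk := (Finset.range (k+1)).preimage τ hinj with hTk
  have hsupp1 : ∀ n ∉ Tk, (if τ n ≤ k then u n else 0) = 0 := by
    intro n hn
    rw [hTk, Finset.mem_preimage, Finset.mem_range] at hn
    simp only [ite_eq_right_iff]
    intro h; omega
  rw [tsum_eq_sum hsupp1]
  have h1 : ∑ n ∈ Tk, (if τ n ≤ k then u n else 0) = ∑ n ∈ Tk, u n := by
    apply Finset.sum_congr rfl
    intro n hn
    rw [hTk, Finset.mem_preimage, Finset.mem_range] at hn
    simp [Nat.lt_succ_iff.mp hn]
  rw [h1]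
  have hcard : Tk.card ≤ k + 1 := by
    have hsub : ∀ a ∈ Tk, τ a ∈ Finset.range (k+1) := fun a ha => Finset.mem_preimage.mp ha
    have hinj2 : Set.InjOn τ ↑Tk := hinj.mono (by
      rw [hTk, Finset.coe_preimage])
    have := Finset.card_le_card_of_injOn τ hsub hinj2
    simpa using this
  calc ∑ n ∈ Tk, u n ≤ ∑ n ∈ Finset.range Tk.card, u n := sum_antitone_le u hu Tk
    _ ≤ ∑ n ∈ Finset.range (k+1), u n :=
        Finset.sum_le_sum_of_subset (Finset.range_subset_range.mpr hcard)
    _ = ∑' n, (if id n ≤ k then u n else 0) := by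
        rw [tsum_eq_sum (s := Finset.range (k+1))]
        · apply Finset.sum_congr rfl
          intro n hn
          rw [Finset.mem_range] at hn
          simp [Nat.lt_succ_iff.mp hn]
        · intro n hn
          rw [Finset.mem_range] at hn
          simp only [id, ite_eq_right_iff]; intro h; omega

lemma lorentzSum_eq (w : ℕ → ℝ) (hmono : Antitone w) (hwnn : ∀ n, 0 ≤ w n)
    (p : ℝ) (hp : 0 < p) (x : ℕ → ℝ) (M : ℕ) (g : Fin M → ℕ) (hg : Function.Injective g)
    (hsupp : ∀ k, (∀ l, g l ≠ k) → x k = 0)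
    (hsort : ∀ (l : ℕ) (h : l + 1 < M),
      |x (g ⟨l+1, h⟩)| ≤ |x (g ⟨l, Nat.lt_of_succ_lt h⟩)|) :
    lorentzSum w p x = ∑ l : Fin M, ENNReal.ofReal (w l * |x (g l)| ^ p) := by
  classical
  set u : ℕ → ℝ≥0∞ := fun n => ENNReal.ofReal (w n) with hu_def
  have hu : Antitone u := fun a b hab => ENNReal.ofReal_le_ofReal (hmono hab)
  set b : ℕ → ℝ≥0∞ := fun n =>
    if h : n < M then ENNReal.ofReal (|x (g ⟨n, h⟩)| ^ p) else 0 with hb_def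
  have hbM : ∀ n, M ≤ n → b n = 0 := by
    intro n hn; simp [hb_def, Nat.not_lt.mpr hn]
  have hb : Antitone b := by
    apply antitone_nat_of_succ_le
    intro n
    by_cases h : n + 1 < M
    · have hn : n < M := Nat.lt_of_succ_lt h
      simp only [hb_def, dif_pos h, dif_pos hn]
      exact ENNReal.ofReal_le_ofReal
        (Real.rpow_le_rpow (abs_nonneg _) (hsort n h) hp.le)
    · simp [hb_def, h]
  set A : ℕ → ℝ≥0∞ := fun k => ENNReal.ofReal (|x k| ^ p) with hA_def
  set τ : ℕ → ℕ := fun k => if h : ∃ l, g l = k then ((h.choose : Fin M) : ℕ) else M + k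
    with hτ_def
  have hA : ∀ k, A k = b (τ k) := by
    intro k
    by_cases h : ∃ l, g l = k
    · have hc := h.choose_spec
      simp only [hτ_def, dif_pos h, hb_def, hA_def]
      rw [dif_pos (h.choose.isLt)]
      congr 2
      rw [show (⟨(h.choose : ℕ), h.choose.isLt⟩ : Fin M) = h.choose from Fin.eta _ _, hc]
    · have hx0 : x k = 0 := hsupp k (fun l hl => h ⟨l, hl⟩)
      simp only [hτ_def, dif_neg h, hb_def, hA_def, hx0, abs_zero,
        Real.zero_rpow hp.ne']
      rw [dif_neg (by omega)]
      simp
  have hτinj : Function.Injective τ := by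
    intro k k' he
    simp only [hτ_def] at he
    by_cases h : ∃ l, g l = k <;> by_cases h' : ∃ l, g l = k'
    · rw [dif_pos h, dif_pos h'] at he
      have : h.choose = h'.choose := Fin.ext he
      rw [← h.choose_spec, ← h'.choose_spec, this]
    · rw [dif_pos h, dif_neg h'] at he
      exact absurd he (by have := h.choose.isLt; omega)
    · rw [dif_neg h, dif_pos h'] at he
      exact absurd he.symm (by have := h'.choose.isLt; omega)
    · rw [dif_neg h, dif_neg h'] at he; omega
  have hsum_eq : ∑' n, u n * b n = ∑ l : Fin M, ENNReal.ofReal (w l * |x (g l)| ^ p) := by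
    rw [tsum_eq_sum (s := Finset.range M) (by
      intro n hn
      rw [Finset.mem_range] at hn
      rw [hbM n (Nat.not_lt.mp hn), mul_zero])]
    rw [← Fin.sum_univ_eq_sum_range (fun n => u n * b n) M]
    apply Finset.sum_congr rfl
    intro l _
    simp only [hu_def, hb_def, dif_pos l.isLt]
    rw [← ENNReal.ofReal_mul (hwnn l)]
  apply le_antisymm
  · apply iSup_le
    rintro ⟨π, hπ⟩
    have h1 : ∀ n, ENNReal.ofReal (w n * |x (π n)| ^ p) = u n * b (τ (π n)) := by
      intro n
      rw [← hA (π n), hA_def, hu_def, ← ENNReal.ofReal_mul (hwnn n)]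
    calc ∑' n, ENNReal.ofReal (w n * |x (π n)| ^ p)
        = ∑' n, u n * b (τ (π n)) := tsum_congr h1
      _ ≤ ∑' n, u n * b n := rearrange_le u b hu hb M hbM (τ ∘ π) (hτinj.comp hπ)
      _ = _ := hsum_eq
  · set N : ℕ := (Finset.univ.sup fun l : Fin M => g l) + 1 with hN_def
    have hgN : ∀ l : Fin M, g l < N := by
      intro l
      have : g l ≤ Finset.univ.sup fun l : Fin M => g l :=
        Finset.le_sup (Finset.mem_univ l)
      omega
    set gg : ℕ → ℕ := fun l => if h : l < M then g ⟨l, h⟩ else l + N with hgg_def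
    have hgginj : Function.Injective gg := by
      intro a a' he
      simp only [hgg_def] at he
      by_cases h : a < M <;> by_cases h' : a' < M
      · rw [dif_pos h, dif_pos h'] at he
        have := hg he
        exact Fin.mk.injEq _ _ _ _ ▸ (by injection this)
      · rw [dif_pos h, dif_neg h'] at he
        exact absurd he (by have := hgN ⟨a, h⟩; omega)
      · rw [dif_neg h, dif_pos h'] at he
        exact absurd he.symm (by have := hgN ⟨a', h'⟩; omega)
      · rw [dif_neg h, dif_neg h'] at he; omega
    have hval : ∑' n, ENNReal.ofReal (w n * |x (gg n)| ^ p)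
        = ∑ l : Fin M, ENNReal.ofReal (w l * |x (g l)| ^ p) := by
      rw [tsum_eq_sum (s := Finset.range M) (by
        intro n hn
        rw [Finset.mem_range] at hn
        have hx0 : x (gg n) = 0 := by
          apply hsupp
          intro l
          simp only [hgg_def, dif_neg hn]
          have := hgN l; omega
        rw [hx0]
        simp [Real.zero_rpow hp.ne'])]
      rw [← Fin.sum_univ_eq_sum_range (fun n => ENNReal.ofReal (w n * |x (gg n)| ^ p)) M]
      apply Finset.sum_congr rfl
      intro l _
      congr 2
      simp [hgg_def, l.isLt]
    calc ∑ l : Fin M, ENNReal.ofReal (w l * |x (g l)| ^ p)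
        = ∑' n, ENNReal.ofReal (w n * |x (gg n)| ^ p) := hval.symm
      _ ≤ _ := le_iSup (fun π : {g : ℕ → ℕ // Function.Injective g} =>
          ∑' n, ENNReal.ofReal (w n * |x (π.1 n)| ^ p)) ⟨gg, hgginj⟩

lemma abs_add_rpow_le (p : ℝ) (hp : 0 ≤ p) (u v : ℝ) :
    |u + v| ^ p ≤ 2 ^ p * (|u| ^ p + |v| ^ p) := by
  have h1 : |u + v| ≤ 2 * max |u| |v| := by
    have := abs_add_le u v
    have h2 := le_max_left |u| |v|
    have h3 := le_max_right |u| |v|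
    linarith
  calc |u + v| ^ p ≤ (2 * max |u| |v|) ^ p :=
        Real.rpow_le_rpow (abs_nonneg _) h1 hp
    _ = 2 ^ p * (max |u| |v|) ^ p :=
        Real.mul_rpow (by norm_num) (le_max_of_le_left (abs_nonneg _))
    _ ≤ 2 ^ p * (|u| ^ p + |v| ^ p) := by
        apply mul_le_mul_of_nonneg_left _ (Real.rpow_nonneg (by norm_num) p)
        rcases max_cases |u| |v| with ⟨h, _⟩ | ⟨h, _⟩ <;> rw [h]
        · exact le_add_of_nonneg_right (Real.rpow_nonneg (abs_nonneg _) _)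
        · exact le_add_of_nonneg_left (Real.rpow_nonneg (abs_nonneg _) _)

lemma lorentz_le_sum (w : ℕ → ℝ) (p : ℝ) (hp : 0 < p) (hmono : Antitone w)
    (hw0 : w 0 = 1) (x : ℕ → ℝ) (S : Finset ℕ) (hx : ∀ k ∉ S, x k = 0) :
    lorentzSum w p x ≤ ∑ k ∈ S, ENNReal.ofReal (|x k| ^ p) := by
  apply iSup_le
  rintro ⟨π, hπ⟩
  calc ∑' n, ENNReal.ofReal (w n * |x (π n)| ^ p)
      ≤ ∑' n, ENNReal.ofReal (|x (π n)| ^ p) := by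
        apply Summable.tsum_le_tsum _ ENNReal.summable ENNReal.summable
        intro n
        apply ENNReal.ofReal_le_ofReal
        have h1 : w n ≤ 1 := hw0 ▸ hmono (Nat.zero_le n)
        nlinarith [Real.rpow_nonneg (abs_nonneg (x (π n))) p]
    _ ≤ ∑' k, ENNReal.ofReal (|x k| ^ p) :=
        tsum_comp_le_tsum_of_injective hπ _
    _ = ∑ k ∈ S, ENNReal.ofReal (|x k| ^ p) := by
        apply tsum_eq_sum
        intro k hk
        rw [hx k hk]
        simp [Real.zero_rpow hp.ne']

lemma lorentz_fin (w : ℕ → ℝ) (p : ℝ) (hp : 0 < p) (hmono : Antitone w)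
    (hw0 : w 0 = 1) (x : ℕ → ℝ) (S : Finset ℕ) (hx : ∀ k ∉ S, x k = 0) :
    lorentzSum w p x ≠ ⊤ := by
  apply ne_top_of_le_ne_top _ (lorentz_le_sum w p hp hmono hw0 x S hx)
  exact (ENNReal.sum_lt_top.mpr fun k _ => ENNReal.ofReal_lt_top).ne

lemma lorentz_smul_le (w : ℕ → ℝ) (hwnn : ∀ n, 0 ≤ w n) (p : ℝ) (c : ℝ) (x : ℕ → ℝ) :
    lorentzSum w p (fun n => c * x n) ≤ ENNReal.ofReal (|c| ^ p) * lorentzSum w p x := by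
  apply iSup_le
  rintro ⟨π, hπ⟩
  calc ∑' n, ENNReal.ofReal (w n * |c * x (π n)| ^ p)
      = ∑' n, ENNReal.ofReal (|c| ^ p) * ENNReal.ofReal (w n * |x (π n)| ^ p) := by
        apply tsum_congr; intro n
        rw [← ENNReal.ofReal_mul (Real.rpow_nonneg (abs_nonneg c) p)]
        congr 1
        rw [abs_mul, Real.mul_rpow (abs_nonneg c) (abs_nonneg _)]
        ring
    _ = ENNReal.ofReal (|c| ^ p) * ∑' n, ENNReal.ofReal (w n * |x (π n)| ^ p) :=
        ENNReal.tsum_mul_left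
    _ ≤ ENNReal.ofReal (|c| ^ p) * lorentzSum w p x := by
        apply mul_le_mul_right
        exact le_iSup (fun π : {g : ℕ → ℕ // Function.Injective g} =>
          ∑' n, ENNReal.ofReal (w n * |x (π.1 n)| ^ p)) ⟨π, hπ⟩

lemma lorentz_add_le (w : ℕ → ℝ) (hwnn : ∀ n, 0 ≤ w n) (p : ℝ) (hp : 0 < p)
    (x y : ℕ → ℝ) :
    lorentzSum w p (fun n => x n + y n)
      ≤ ENNReal.ofReal (2 ^ p) * (lorentzSum w p x + lorentzSum w p y) := by
  apply iSup_le
  rintro ⟨π, hπ⟩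
  have key : ∀ n, ENNReal.ofReal (w n * |x (π n) + y (π n)| ^ p)
      ≤ ENNReal.ofReal (2 ^ p) *
        (ENNReal.ofReal (w n * |x (π n)| ^ p) + ENNReal.ofReal (w n * |y (π n)| ^ p)) := by
    intro n
    rw [← ENNReal.ofReal_add (mul_nonneg (hwnn n) (Real.rpow_nonneg (abs_nonneg _) _))
        (mul_nonneg (hwnn n) (Real.rpow_nonneg (abs_nonneg _) _)),
      ← ENNReal.ofReal_mul (Real.rpow_nonneg (by norm_num) p)]
    apply ENNReal.ofReal_le_ofReal
    have h1 := abs_add_rpow_le p hp.le (x (π n)) (y (π n))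
    have h2 := hwnn n
    nlinarith [Real.rpow_nonneg (abs_nonneg (x (π n) + y (π n))) p]
  calc ∑' n, ENNReal.ofReal (w n * |x (π n) + y (π n)| ^ p)
      ≤ ∑' n, ENNReal.ofReal (2 ^ p) *
        (ENNReal.ofReal (w n * |x (π n)| ^ p) + ENNReal.ofReal (w n * |y (π n)| ^ p)) :=
        Summable.tsum_le_tsum key ENNReal.summable ENNReal.summable
    _ = ENNReal.ofReal (2 ^ p) *
        ((∑' n, ENNReal.ofReal (w n * |x (π n)| ^ p)) +
          ∑' n, ENNReal.ofReal (w n * |y (π n)| ^ p)) := by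
        rw [ENNReal.tsum_mul_left, ENNReal.tsum_add]
    _ ≤ ENNReal.ofReal (2 ^ p) * (lorentzSum w p x + lorentzSum w p y) := by
        apply mul_le_mul_right
        apply add_le_add
        · exact le_iSup (fun π : {g : ℕ → ℕ // Function.Injective g} =>
            ∑' n, ENNReal.ofReal (w n * |x (π.1 n)| ^ p)) ⟨π, hπ⟩
        · exact le_iSup (fun π : {g : ℕ → ℕ // Function.Injective g} =>
            ∑' n, ENNReal.ofReal (w n * |y (π.1 n)| ^ p)) ⟨π, hπ⟩

lemma lorentz_add_ne_top (w : ℕ → ℝ) (hwnn : ∀ n, 0 ≤ w n) (p : ℝ) (hp : 0 < p)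
    (x y : ℕ → ℝ) (hx : lorentzSum w p x ≠ ⊤) (hy : lorentzSum w p y ≠ ⊤) :
    lorentzSum w p (fun n => x n + y n) ≠ ⊤ := by
  apply ne_top_of_le_ne_top _ (lorentz_add_le w hwnn p hp x y)
  exact (ENNReal.mul_lt_top ENNReal.ofReal_lt_top
    (by rw [ENNReal.add_lt_top]; exact ⟨hx.lt_top, hy.lt_top⟩)).ne

lemma lorentz_smul_ne_top (w : ℕ → ℝ) (hwnn : ∀ n, 0 ≤ w n) (p : ℝ) (c : ℝ)
    (x : ℕ → ℝ) (hx : lorentzSum w p x ≠ ⊤) :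
    lorentzSum w p (fun n => c * x n) ≠ ⊤ := by
  apply ne_top_of_le_ne_top _ (lorentz_smul_le w hwnn p c x)
  exact (ENNReal.mul_lt_top ENNReal.ofReal_lt_top hx.lt_top).ne

lemma myDerivAbsRpow (p : ℝ) (hp : 1 < p) (c s : ℝ) (h : c ≠ 0 ∨ s = 0) :
    HasDerivAt (fun t : ℝ => |c + t * s| ^ p)
      (p * |c| ^ (p - 1) * Real.sign c * s) 0 := by
  rcases eq_or_ne s 0 with hs | hs
  · have he : (fun t : ℝ => |c + t * s| ^ p) = fun _ : ℝ => |c| ^ p := by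
      funext t; rw [hs, mul_zero, add_zero]
    rw [he, hs, mul_zero]
    exact hasDerivAt_const 0 _
  · have hc : c ≠ 0 := h.resolve_right hs
    have base : HasDerivAt (fun t : ℝ => c + t * s) s 0 := by
      simpa using ((hasDerivAt_id (0 : ℝ)).mul_const s).const_add c
    have hcont : Filter.Tendsto (fun t : ℝ => c + t * s) (nhds 0) (nhds c) := by
      have := base.continuousAt
      simpa [ContinuousAt] using this
    rcases hc.lt_or_gt with hneg | hpos
    · have hev : ∀ᶠ t in nhds (0 : ℝ), c + t * s < 0 :=
        hcont.eventually (eventually_lt_nhds hneg)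
      have h1 : HasDerivAt (fun t : ℝ => (-(c + t * s)) ^ p) (-s * p * (-c) ^ (p - 1)) 0 := by
        simpa using (base.neg).rpow_const (p := p) (Or.inr hp.le)
      have h2 : HasDerivAt (fun t : ℝ => |c + t * s| ^ p) (-s * p * (-c) ^ (p - 1)) 0 := by
        apply h1.congr_of_eventuallyEq
        filter_upwards [hev] with t ht
        rw [abs_of_neg ht]
      have : p * |c| ^ (p - 1) * Real.sign c * s = -s * p * (-c) ^ (p - 1) := by
        rw [abs_of_neg hneg, Real.sign_of_neg hneg]; ring
      rw [this]
      exact h2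
    · have hev : ∀ᶠ t in nhds (0 : ℝ), 0 < c + t * s :=
        hcont.eventually (eventually_gt_nhds hpos)
      have h1 : HasDerivAt (fun t : ℝ => (c + t * s) ^ p) (s * p * c ^ (p - 1)) 0 := by
        simpa using base.rpow_const (p := p) (Or.inr hp.le)
      have h2 : HasDerivAt (fun t : ℝ => |c + t * s| ^ p) (s * p * c ^ (p - 1)) 0 := by
        apply h1.congr_of_eventuallyEq
        filter_upwards [hev] with t ht
        rw [abs_of_pos ht]
      have : p * |c| ^ (p - 1) * Real.sign c * s = s * p * c ^ (p - 1) := by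
        rw [abs_of_pos hpos, Real.sign_of_pos hpos]; ring
      rw [this]
      exact h2

lemma deriv_cond (w : ℕ → ℝ) (hmono : Antitone w) (hwnn : ∀ n, 0 ≤ w n)
    (p : ℝ) (hp : 1 < p) (M : ℕ) (g : Fin M → ℕ) (hg : Function.Injective g)
    (y zf : ℕ → ℝ)
    (hsupp : ∀ k, (∀ l, g l ≠ k) → y k = 0)
    (hzsupp : ∀ k, (∀ l, g l ≠ k) → zf k = 0)
    (hy0 : ∀ l, y (g l) ≠ 0)
    (hstrict : ∀ (l : ℕ) (h : l + 1 < M),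
      |y (g ⟨l+1, h⟩)| < |y (g ⟨l, Nat.lt_of_succ_lt h⟩)|)
    (hmin : ∀ t : ℝ, lorentzSum w p y ≤ lorentzSum w p (fun k => y k + t * zf k)) :
    ∑ l : Fin M, w l * (p * |y (g l)| ^ (p - 1) * Real.sign (y (g l)) * zf (g l)) = 0 := by
  rcases Nat.eq_zero_or_pos M with hM | hM
  · subst hM; simp
  classical
  set gap : ℕ → ℝ := fun l =>
    if h : l + 1 < M then |y (g ⟨l, Nat.lt_of_succ_lt h⟩)| - |y (g ⟨l+1, h⟩)| else 1
    with hgap_def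
  have hrangeM : (Finset.range M).Nonempty := ⟨0, Finset.mem_range.mpr hM⟩
  set γ : ℝ := (Finset.range M).inf' hrangeM gap with hγ_def
  have hγpos : 0 < γ := by
    rw [hγ_def, Finset.lt_inf'_iff]
    intro l _
    by_cases h : l + 1 < M
    · simp only [hgap_def, dif_pos h]
      exact sub_pos.mpr (hstrict l h)
    · simp [hgap_def, h]
  set Z : ℝ := 1 + ∑ l : Fin M, |zf (g l)| with hZ_def
  have hZpos : 0 < Z := by
    have : (0:ℝ) ≤ ∑ l : Fin M, |zf (g l)| :=
      Finset.sum_nonneg fun l _ => abs_nonneg _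
    rw [hZ_def]; linarith
  have hZl : ∀ l : Fin M, |zf (g l)| ≤ Z := by
    intro l
    have := Finset.single_le_sum (f := fun l : Fin M => |zf (g l)|)
      (fun l _ => abs_nonneg _) (Finset.mem_univ l)
    rw [hZ_def]; linarith
  set δ : ℝ := γ / (2 * Z) with hδ_def
  have hδpos : 0 < δ := by positivity
  have hpert : ∀ t : ℝ, |t| < δ → ∀ l : Fin M, |t * zf (g l)| < γ / 2 := by
    intro t ht l
    rw [abs_mul]
    calc |t| * |zf (g l)| ≤ |t| * Z :=
          mul_le_mul_of_nonneg_left (hZl l) (abs_nonneg t)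
      _ < δ * Z := by
          apply mul_lt_mul_of_pos_right ht hZpos
      _ = γ / 2 := by rw [hδ_def]; field_simp
  have heq : ∀ t : ℝ, |t| < δ →
      lorentzSum w p (fun k => y k + t * zf k)
        = ENNReal.ofReal (∑ l : Fin M, w l * |y (g l) + t * zf (g l)| ^ p) := by
    intro t ht
    have hq := lorentzSum_eq w hmono hwnn p (lt_trans one_pos hp)
      (fun k => y k + t * zf k) M g hg
      (by
        intro k hk
        show y k + t * zf k = 0
        rw [hsupp k hk, hzsupp k hk, mul_zero, add_zero])
      (by
        intro l h
        have hl : l < M := Nat.lt_of_succ_lt h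
        set l1 : Fin M := ⟨l, hl⟩
        set l2 : Fin M := ⟨l+1, h⟩
        have e1 : |y (g l2) + t * zf (g l2)| ≤ |y (g l2)| + |t * zf (g l2)| := abs_add_le _ _
        have e2 : |y (g l1)| - |t * zf (g l1)| ≤ |y (g l1) + t * zf (g l1)| := by
          have := abs_add_le (y (g l1) + t * zf (g l1)) (-(t * zf (g l1)))
          simp only [add_neg_cancel_right, abs_neg] at this
          linarith
        have e3 : γ ≤ |y (g l1)| - |y (g l2)| := by
          have hmem : l ∈ Finset.range M := Finset.mem_range.mpr hl
          have := Finset.inf'_le gap hmem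
          rw [← hγ_def] at this
          simpa only [hgap_def, dif_pos h] using this
        have e4 := hpert t ht l1
        have e5 := hpert t ht l2
        linarith)
    rw [hq, ENNReal.ofReal_sum_of_nonneg]
    intro l _
    exact mul_nonneg (hwnn l) (Real.rpow_nonneg (abs_nonneg _) _)
  set F : ℝ → ℝ := fun t => ∑ l : Fin M, w l * |y (g l) + t * zf (g l)| ^ p with hF_def
  have hFnn : ∀ t, 0 ≤ F t := fun t =>
    Finset.sum_nonneg fun l _ => mul_nonneg (hwnn l) (Real.rpow_nonneg (abs_nonneg _) _)
  have hh0 : lorentzSum w p y = ENNReal.ofReal (F 0) := by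
    have h1 : (fun k => y k + (0:ℝ) * zf k) = y := by funext k; ring
    have := heq 0 (by simpa using hδpos)
    rw [h1] at this
    exact this
  have hlocmin : IsLocalMin F 0 := by
    have : ∀ᶠ t in nhds (0 : ℝ), F 0 ≤ F t := by
      filter_upwards [Metric.ball_mem_nhds (0 : ℝ) hδpos] with t ht
      rw [Metric.mem_ball, Real.dist_eq, sub_zero] at ht
      have h2 := hmin t
      rw [hh0, heq t ht] at h2
      exact (ENNReal.ofReal_le_ofReal_iff (hFnn t)).mp h2
    exact this
  have hderiv : HasDerivAt F
      (∑ l : Fin M, w l * (p * |y (g l)| ^ (p - 1) * Real.sign (y (g l)) * zf (g l))) 0 := by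
    apply HasDerivAt.fun_sum
    intro l _
    exact (myDerivAbsRpow p hp (y (g l)) (zf (g l)) (Or.inl (hy0 l))).const_mul (w l)
  have h0 := hlocmin.deriv_eq_zero
  rw [hderiv.deriv] at h0
  exact h0

set_option maxHeartbeats 2000000 in
lemma key_lemma (p : ℝ) (hp : 1 < p)
    (w : ℕ → ℝ) (hmono : Antitone w) (hw0 : w 0 = 1) (hpos : ∀ n, 0 < w n)
    (i j : ℕ) (hij : i ≠ j) (fi fj : ℝ) (hfi : fi ≠ 0) (hfj : fj ≠ 0)
    (P : (ℕ → ℝ) →ₗ[ℝ] (ℕ → ℝ))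
    (hinto : ∀ x : ℕ → ℝ, lorentzSum w p x ≠ ⊤ → fi * P x i + fj * P x j = 0)
    (hfix : ∀ x : ℕ → ℝ, lorentzSum w p x ≠ ⊤ → fi * x i + fj * x j = 0 → P x = x)
    (hcontr : ∀ x, lorentzSum w p (P x) ≤ lorentzSum w p x)
    (hlt : |fj| < |fi|) :
    ∀ k, w k = 1 := by
  classical
  have hwnn : ∀ n, 0 ≤ w n := fun n => (hpos n).le
  have hp0 : (0:ℝ) < p := lt_trans one_pos hp
  set α : ℝ := |fi| with hα_def
  set β : ℝ := |fj| with hβ_def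
  have hβpos : 0 < β := abs_pos.mpr hfj
  have hαβ : β < α := hlt
  have hαpos : 0 < α := lt_trans hβpos hαβ
  -- the vector x0 with f(x0)=1
  set x0 : ℕ → ℝ := fun k => if k = i then fi⁻¹ else 0 with hx0_def
  have hx0fin : lorentzSum w p x0 ≠ ⊤ := by
    apply lorentz_fin w p hp0 hmono hw0 x0 {i}
    intro k hk
    simp only [Finset.mem_singleton] at hk
    simp [hx0_def, hk]
  have hPx0fin : lorentzSum w p (P x0) ≠ ⊤ :=
    ne_top_of_le_ne_top hx0fin (hcontr x0)
  set z : ℕ → ℝ := x0 - P x0 with hz_def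
  have hzk_app : ∀ k, z k = x0 k - P x0 k := fun k => rfl
  have hzfin : lorentzSum w p z ≠ ⊤ := by
    have he : (z : ℕ → ℝ) = fun k => x0 k + (-1) * (P x0 k) := by
      funext k; rw [hzk_app]; ring
    rw [he]
    exact lorentz_add_ne_top w hwnn p hp0 _ _ hx0fin
      (lorentz_smul_ne_top w hwnn p (-1) _ hPx0fin)
  have hfz : fi * z i + fj * z j = 1 := by
    have h1 := hinto x0 hx0fin
    have h2 : x0 i = fi⁻¹ := by simp [hx0_def]
    have h3 : x0 j = 0 := by simp [hx0_def, hij.symm]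
    rw [hzk_app, hzk_app, h2, h3]
    have h4 : fi * fi⁻¹ = 1 := mul_inv_cancel₀ hfi
    nlinarith [h1, h4]
  have hPz : P z = 0 := by
    have hPPx0 : P (P x0) = P x0 := hfix (P x0) hPx0fin (hinto x0 hx0fin)
    rw [hz_def, map_sub, hPPx0, sub_self]
  -- projection formula
  have hproj : ∀ x : ℕ → ℝ, lorentzSum w p x ≠ ⊤ →
      P x = x - (fi * x i + fj * x j) • z := by
    intro x hx
    set c : ℝ := fi * x i + fj * x j with hc_def
    have hyfin : lorentzSum w p (x - c • z) ≠ ⊤ := by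
      have he : (x - c • z) = fun k => x k + (-c) * z k := by
        funext k
        simp only [Pi.sub_apply, Pi.smul_apply, smul_eq_mul]
        ring
      rw [he]
      exact lorentz_add_ne_top w hwnn p hp0 _ _ hx
        (lorentz_smul_ne_top w hwnn p (-c) _ hzfin)
    have hyker : fi * (x - c • z) i + fj * (x - c • z) j = 0 := by
      simp only [Pi.sub_apply, Pi.smul_apply, smul_eq_mul]
      rw [hc_def]
      linear_combination (-(fi * x i + fj * x j)) * hfz
    have h1 := hfix _ hyfin hyker
    have h2 : P (x - c • z) = P x - c • P z := by rw [map_sub, map_smul]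
    rw [hPz, smul_zero, sub_zero] at h2
    rw [← h2, h1]
  -- the minimality property
  have hstar : ∀ v : ℕ → ℝ, lorentzSum w p v ≠ ⊤ → fi * v i + fj * v j = 0 →
      ∀ t : ℝ, lorentzSum w p v ≤ lorentzSum w p (fun k => v k + t * z k) := by
    intro v hv hvker t
    have hxfin : lorentzSum w p (fun k => v k + t * z k) ≠ ⊤ :=
      lorentz_add_ne_top w hwnn p hp0 _ _ hv
        (lorentz_smul_ne_top w hwnn p t _ hzfin)
    have hpx := hproj _ hxfin
    have hfval : fi * (v i + t * z i) + fj * (v j + t * z j) = t := by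
      linear_combination hvker + t * hfz
    rw [hfval] at hpx
    have hPx : P (fun k => v k + t * z k) = v := by
      rw [hpx]
      funext k
      simp only [Pi.sub_apply, Pi.smul_apply, smul_eq_mul]
      ring
    have := hcontr (fun k => v k + t * z k)
    rw [hPx] at this
    exact this
  -- z is supported on {i, j}
  have hzk : ∀ k, k ≠ i → k ≠ j → z k = 0 := by
    have main : ∀ σ : ℝ, |σ| = 1 → ∀ k, k ≠ i → k ≠ j → 0 ≤ σ * z k := by
      intro σ hσ k hki hkj
      by_contra hneg
      push_neg at hneg
      set d : ℝ := -(σ * z k) with hd_def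
      have hdpos : 0 < d := by rw [hd_def]; linarith
      set C : ℝ := w 1 * |fi⁻¹| ^ p with hC_def
      have hMbound : ∀ M : ℝ, 1 < M → |fi⁻¹| < M → w 0 * p * d * M ^ (p-1) ≤ C := by
        intro M hM1 hM2
        have hM0 : (0:ℝ) < M := lt_trans one_pos hM1
        set xM : ℕ → ℝ := fun n => if n = k then M else if n = i then σ * fi⁻¹ else 0
          with hxM_def
        have hfinM : lorentzSum w p xM ≠ ⊤ := by
          apply lorentz_fin w p hp0 hmono hw0 xM {k, i}
          intro n hn
          simp only [Finset.mem_insert, Finset.mem_singleton, not_or] at hn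
          simp [hxM_def, hn.1, hn.2]
        have hfxM : fi * xM i + fj * xM j = σ := by
          have h1 : xM i = σ * fi⁻¹ := by
            simp [hxM_def, hki.symm]
          have h2 : xM j = 0 := by
            simp [hxM_def, hkj.symm, hij.symm]
          rw [h1, h2]
          field_simp
          ring
        have hPxM := hproj xM hfinM
        rw [hfxM] at hPxM
        have hcM := hcontr xM
        rw [hPxM] at hcM
        -- compute the right side
        have hRHS : lorentzSum w p xM
            = ENNReal.ofReal (w 0 * |xM k| ^ p) + ENNReal.ofReal (w 1 * |xM i| ^ p) := by
          have := lorentzSum_eq w hmono hwnn p hp0 xM 2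
            (fun l => if l.1 = 0 then k else i)
            (by
              intro l l' he
              simp only at he
              split_ifs at he with h1 h2 h2
              · exact Fin.ext (by omega)
              · exact absurd he hki
              · exact absurd he.symm hki
              · exact Fin.ext (by omega))
            (by
              intro n hn
              have h0 := hn ⟨0, by omega⟩
              have h1 := hn ⟨1, by omega⟩
              norm_num at h0 h1
              have h0' : n ≠ k := Ne.symm h0
              have h1' : n ≠ i := Ne.symm h1
              simp [hxM_def, h0', h1'])
            (by
              intro l hl
              have hl0 : l = 0 := by omega
              subst hl0
              norm_num
              have e1 : xM k = M := by simp [hxM_def]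
              have e2 : xM i = σ * fi⁻¹ := by simp [hxM_def, hki.symm]
              rw [e1, e2, abs_mul, hσ, one_mul, abs_of_pos hM0]
              exact hM2.le)
          rw [this, Fin.sum_univ_two]
          rfl
        -- lower bound for left side
        have hLHS : ENNReal.ofReal (w 0 * |(M + d)| ^ p)
            ≤ lorentzSum w p (xM - σ • z) := by
          have hinj : Function.Injective (fun n : ℕ => k + n) :=
            fun a b h => Nat.add_left_cancel h
          have hval : (xM - σ • z) k = M + d := by
            simp only [Pi.sub_apply, Pi.smul_apply, smul_eq_mul]
            have : xM k = M := by simp [hxM_def]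
            rw [this, hd_def]; ring
          calc ENNReal.ofReal (w 0 * |(M + d)| ^ p)
              = ENNReal.ofReal (w 0 * |(xM - σ • z) ((fun n : ℕ => k + n) 0)| ^ p) := by
                rw [show (fun n : ℕ => k + n) 0 = k by simp, hval]
            _ ≤ ∑' n, ENNReal.ofReal (w n * |(xM - σ • z) ((fun n : ℕ => k + n) n)| ^ p) :=
                ENNReal.le_tsum 0
            _ ≤ lorentzSum w p (xM - σ • z) :=
                le_iSup (fun π : {g : ℕ → ℕ // Function.Injective g} =>
                  ∑' n, ENNReal.ofReal (w n * |(xM - σ • z) (π.1 n)| ^ p)) ⟨_, hinj⟩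
        have hplug : ENNReal.ofReal (w 0 * |(M + d)| ^ p)
            ≤ ENNReal.ofReal (w 0 * |xM k| ^ p + w 1 * |xM i| ^ p) := by
          calc ENNReal.ofReal (w 0 * |(M + d)| ^ p) ≤ lorentzSum w p (xM - σ • z) := hLHS
            _ ≤ lorentzSum w p xM := hcM
            _ = _ := by
                rw [hRHS, ← ENNReal.ofReal_add
                  (mul_nonneg (hwnn 0) (Real.rpow_nonneg (abs_nonneg _) _))
                  (mul_nonneg (hwnn 1) (Real.rpow_nonneg (abs_nonneg _) _))]
        have hreal : w 0 * |(M + d)| ^ p ≤ w 0 * |xM k| ^ p + w 1 * |xM i| ^ p := by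
          apply (ENNReal.ofReal_le_ofReal_iff _).mp hplug
          have n1 := Real.rpow_nonneg (abs_nonneg (xM k)) p
          have n2 := Real.rpow_nonneg (abs_nonneg (xM i)) p
          have n3 := hwnn 0
          have n4 := hwnn 1
          have := mul_nonneg n3 n1
          have := mul_nonneg n4 n2
          linarith
        have e1 : xM k = M := by simp [hxM_def]
        have e2 : xM i = σ * fi⁻¹ := by simp [hxM_def, hki.symm]
        rw [e1, e2, abs_mul, hσ, one_mul, abs_of_pos hM0] at hreal
        -- Bernoulli estimate
        have hbern : M ^ p + p * d * M ^ (p-1) ≤ |M + d| ^ p := by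
          have hMd : 0 < M + d := by linarith
          rw [abs_of_pos hMd]
          have h1 : M + d = M * (1 + d / M) := by field_simp
          have hdM : (0:ℝ) ≤ d / M := div_nonneg hdpos.le hM0.le
          have h2 : (1:ℝ) + p * (d / M) ≤ (1 + d / M) ^ p :=
            one_add_mul_self_le_rpow_one_add (by linarith) hp.le
          have h3 : (M + d) ^ p = M ^ p * (1 + d / M) ^ p := by
            rw [h1, Real.mul_rpow hM0.le (by linarith)]
          have h4 : M ^ (p - 1) = M ^ p / M := by
            rw [Real.rpow_sub hM0, Real.rpow_one]
          have h5 : (0:ℝ) < M ^ p := Real.rpow_pos_of_pos hM0 p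
          rw [h3, h4]
          calc M ^ p + p * d * (M ^ p / M) = M ^ p * (1 + p * (d / M)) := by
                field_simp
            _ ≤ M ^ p * (1 + d / M) ^ p := by nlinarith
        have hb2 : w 0 * (M ^ p + p * d * M ^ (p-1)) ≤ w 0 * |M + d| ^ p :=
          mul_le_mul_of_nonneg_left hbern (hwnn 0)
        rw [hC_def]
        clear_value d C z x0
        nlinarith [hb2, hreal]
      -- contradiction by unboundedness
      have htend : Filter.Tendsto (fun M : ℝ => w 0 * p * d * M ^ (p-1))
          Filter.atTop Filter.atTop := by
        have h1 := tendsto_rpow_atTop (show (0:ℝ) < p - 1 by linarith)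
        exact h1.const_mul_atTop (by positivity : (0:ℝ) < w 0 * p * d)
      obtain ⟨M, hMa, hMb⟩ :=
        ((htend.eventually_gt_atTop C).and
          (Filter.eventually_gt_atTop (max 1 |fi⁻¹|))).exists
      have hM1 : 1 < M := lt_of_le_of_lt (le_max_left _ _) hMb
      have hM2 : |fi⁻¹| < M := lt_of_le_of_lt (le_max_right _ _) hMb
      exact absurd (hMbound M hM1 hM2) (not_le.mpr hMa)
    intro k hki hkj
    have h1 := main 1 (by norm_num) k hki hkj
    have h2 := main (-1) (by norm_num) k hki hkj
    nlinarith
  -- names for the two key quantities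
  have hβp : β ^ (p-1) ≠ 0 := (Real.rpow_pos_of_pos hβpos _).ne'
  set X : ℝ := p * β ^ (p-1) * Real.sign fj * z i with hX_def
  set Y : ℝ := p * α ^ (p-1) * Real.sign fi * z j with hY_def
  set base : ℕ := i + j + 1 with hbase_def
  have hbi : i < base := by omega
  have hbj : j < base := by omega
  -- the "between" configurations
  have Em : ∀ m : ℕ, w (m+1) * X = w 0 * Y := by
    intro m
    set cfun : ℕ → ℝ := fun l => β + (α - β) * ((m + 1 - l : ℕ) : ℝ) / ((m:ℝ) + 2)
      with hcfun_def
    have hm2pos : (0:ℝ) < (m:ℝ) + 2 := by positivity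
    have hcast : ∀ l : ℕ, l ≤ m + 1 → ((m + 1 - l : ℕ) : ℝ) = (m:ℝ) + 1 - l := by
      intro l hl
      rw [Nat.cast_sub hl]
      push_cast
      ring
    have hcpos : ∀ l : ℕ, 1 ≤ l → l ≤ m → 0 < cfun l := by
      intro l h1 h2
      have hq : 0 ≤ (α - β) * ((m + 1 - l : ℕ) : ℝ) / ((m:ℝ) + 2) :=
        div_nonneg (mul_nonneg (by linarith) (Nat.cast_nonneg _)) hm2pos.le
      simp only [hcfun_def]
      linarith
    have hclt : ∀ l : ℕ, 1 ≤ l → l ≤ m → cfun l < α := by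
      intro l h1 h2
      simp only [hcfun_def]
      rw [hcast l (by omega)]
      have hl1 : (1:ℝ) ≤ (l:ℝ) := by exact_mod_cast h1
      have hmnn : (0:ℝ) ≤ (m:ℝ) := Nat.cast_nonneg m
      have key : (α - β) * ((m:ℝ)+1-(l:ℝ)) / ((m:ℝ)+2) < α - β := by
        rw [div_lt_iff₀ hm2pos]
        nlinarith
      linarith
    have hcgt : ∀ l : ℕ, 1 ≤ l → l ≤ m → β < cfun l := by
      intro l h1 h2
      simp only [hcfun_def]
      rw [hcast l (by omega)]
      have hlm : (l:ℝ) ≤ (m:ℝ) := by exact_mod_cast h2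
      have h3 : (1:ℝ) ≤ (m:ℝ)+1-(l:ℝ) := by linarith
      have h4 : 0 < (α - β) * ((m:ℝ)+1-(l:ℝ)) / ((m:ℝ)+2) :=
        div_pos (mul_pos (by linarith) (by linarith)) hm2pos
      linarith
    have hcdec : ∀ l : ℕ, 1 ≤ l → l + 1 ≤ m → cfun (l+1) < cfun l := by
      intro l h1 h2
      simp only [hcfun_def]
      rw [hcast (l+1) (by omega), hcast l (by omega)]
      apply add_lt_add_right
      apply div_lt_div_of_pos_right _ hm2pos
      push_cast
      nlinarith
    set g : Fin (m+2) → ℕ :=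
      fun l => if l.1 = 0 then j else if l.1 = m+1 then i else base + l.1 with hg_def
    have hgval : ∀ (lv : ℕ) (h : lv < m+2),
        g ⟨lv, h⟩ = if lv = 0 then j else if lv = m+1 then i else base + lv :=
      fun lv h => rfl
    have hginj : Function.Injective g := by
      rintro ⟨lv, hlv⟩ ⟨lv', hlv'⟩ he
      rw [hgval, hgval] at he
      apply Fin.ext
      simp only
      split_ifs at he <;> omega
    set y : ℕ → ℝ := fun k => if k = j then -fi else if k = i then fj
      else if base + 1 ≤ k ∧ k ≤ base + m then cfun (k - base) else 0 with hy_def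
    have hyj : y j = -fi := by simp [hy_def]
    have hyi : y i = fj := by simp [hy_def, hij]
    have hymid : ∀ l : ℕ, 1 ≤ l → l ≤ m → y (base + l) = cfun l := by
      intro l h1 h2
      have e1 : base + l ≠ j := by omega
      have e2 : base + l ≠ i := by omega
      have e3 : base + 1 ≤ base + l := by omega
      have e4 : base + l ≤ base + m := by omega
      have e5 : base + l - base = l := by omega
      simp [hy_def, e1, e2, e3, e4, e5]
      intro h; omega
    -- apply the derivative condition
    have hcond := deriv_cond w hmono hwnn p hp (m+2) g hginj y z
      (by
        intro k hk
        have h0 := hk ⟨0, by omega⟩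
        have hl := hk ⟨m+1, by omega⟩
        rw [hgval] at h0 hl
        simp only [if_pos rfl] at h0
        rw [if_neg (by omega : ¬ m+1 = 0), if_pos rfl] at hl
        have hmid : ¬(base + 1 ≤ k ∧ k ≤ base + m) := by
          rintro ⟨ha, hb⟩
          have hq := hk ⟨k - base, by omega⟩
          rw [hgval] at hq
          rw [if_neg (by omega : ¬ k - base = 0),
            if_neg (by omega : ¬ k - base = m+1)] at hq
          omega
        have h0' : k ≠ j := Ne.symm h0
        have hl' : k ≠ i := Ne.symm hl
        simp [hy_def, h0', hl', hmid]
        intro ha hb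
        exact (hmid ⟨ha, hb⟩).elim)
      (by
        intro k hk
        have h0 := hk ⟨0, by omega⟩
        have hl := hk ⟨m+1, by omega⟩
        rw [hgval] at h0 hl
        simp only [if_pos rfl] at h0
        rw [if_neg (by omega : ¬ m+1 = 0), if_pos rfl] at hl
        exact hzk k (Ne.symm hl) (Ne.symm h0))
      (by
        rintro ⟨lv, hlv⟩
        rw [hgval]
        by_cases h0 : lv = 0
        · rw [if_pos h0, hyj]
          exact neg_ne_zero.mpr hfi
        · by_cases h1 : lv = m+1
          · rw [if_neg h0, if_pos h1, hyi]
            exact hfj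
          · rw [if_neg h0, if_neg h1, hymid lv (by omega) (by omega)]
            exact (hcpos lv (by omega) (by omega)).ne')
      (by
        intro l h
        have hlm : l ≤ m := by omega
        rw [hgval, hgval]
        by_cases h0 : l = 0
        · subst h0
          rw [if_pos rfl, hyj]
          by_cases hm0 : m = 0
          · rw [if_neg (by omega : ¬ 0+1 = 0), if_pos (by omega : 0+1 = m+1), hyi,
              abs_neg]
            exact hαβ
          · rw [if_neg (by omega : ¬ 0+1 = 0), if_neg (by omega : ¬ 0+1 = m+1)]
            have e5 : (0:ℕ) + 1 = 1 := rfl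
            rw [e5, hymid 1 le_rfl (by omega), abs_neg,
              abs_of_pos (hcpos 1 le_rfl (by omega))]
            exact hclt 1 le_rfl (by omega)
        · rw [if_neg h0, if_neg (by omega : ¬ l = m+1),
            hymid l (by omega) (by omega),
            abs_of_pos (hcpos l (by omega) (by omega)),
            if_neg (by omega : ¬ l+1 = 0)]
          by_cases h1 : l = m
          · rw [if_pos (by omega : l+1 = m+1), hyi, ← hβ_def, h1]
            exact hcgt m (by omega) le_rfl
          · rw [if_neg (by omega : ¬ l+1 = m+1),
              hymid (l+1) (by omega) (by omega),
              abs_of_pos (hcpos (l+1) (by omega) (by omega))]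
            exact hcdec l (by omega) (by omega))
      (by
        intro t
        apply hstar y
        · apply lorentz_fin w p hp0 hmono hw0 y (Finset.range (base + m + 1))
          intro k hk
          rw [Finset.mem_range] at hk
          have e1 : k ≠ j := by omega
          have e2 : k ≠ i := by omega
          have e3 : ¬(base + 1 ≤ k ∧ k ≤ base + m) := by omega
          simp [hy_def, e1, e2, e3]
          intro ha hb
          exact (e3 ⟨ha, hb⟩).elim
        · rw [hyi, hyj]
          ring)
    -- extract the two surviving terms
    set F : Fin (m+2) → ℝ :=
      fun l => w l * (p * |y (g l)| ^ (p - 1) * Real.sign (y (g l)) * z (g l)) with hF_def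
    have hFval : ∀ (lv : ℕ) (h : lv < m+2),
        F ⟨lv, h⟩ = w lv * (p * |y (g ⟨lv, h⟩)| ^ (p - 1)
          * Real.sign (y (g ⟨lv, h⟩)) * z (g ⟨lv, h⟩)) := fun lv h => rfl
    have hmid0 : ∀ l : Fin (m+2), l.1 ≠ 0 → l.1 ≠ m+1 → F l = 0 := by
      rintro ⟨lv, hlv⟩ h0 h1
      simp only at h0 h1
      have hgv : g ⟨lv, hlv⟩ = base + lv := by
        rw [hgval, if_neg h0, if_neg h1]
      have hz0 : z (g ⟨lv, hlv⟩) = 0 := by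
        rw [hgv]
        exact hzk _ (by omega) (by omega)
      rw [hFval, hz0, mul_zero, mul_zero]
    have hpairne : (⟨0, by omega⟩ : Fin (m+2)) ≠ ⟨m+1, by omega⟩ := by
      simp [Fin.ext_iff]
    have hsum2 : ∑ l : Fin (m+2), F l = F ⟨0, by omega⟩ + F ⟨m+1, by omega⟩ := by
      rw [← Finset.sum_pair hpairne]
      apply (Finset.sum_subset (Finset.subset_univ _) _).symm
      intro l _ hl
      simp only [Finset.mem_insert, Finset.mem_singleton] at hl
      push_neg at hl
      exact hmid0 l (fun h => hl.1 (Fin.ext h)) (fun h => hl.2 (Fin.ext h))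
    have hg0 : g ⟨0, by omega⟩ = j := by rw [hgval]; simp
    have hglast : g ⟨m+1, by omega⟩ = i := by
      rw [hgval, if_neg (by omega : ¬ m+1 = 0), if_pos rfl]
    have hF0 : F ⟨0, by omega⟩ = w 0 * (p * α ^ (p-1) * (-Real.sign fi) * z j) := by
      rw [hFval, hg0, hyj, abs_neg, Real.sign_neg, ← hα_def]
    have hFlast : F ⟨m+1, by omega⟩ = w (m+1) * X := by
      rw [hFval, hglast, hyi, hX_def, ← hβ_def]
    have hzero : F ⟨0, by omega⟩ + F ⟨m+1, by omega⟩ = 0 := by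
      rw [← hsum2]
      exact hcond
    rw [hF0, hFlast] at hzero
    rw [hY_def]
    linarith [hzero]
  -- the "one big" configuration
  have Ebig : w 2 * X = w 1 * Y := by
    set g : Fin 3 → ℕ := fun l => if l.1 = 0 then base else if l.1 = 1 then j else i
      with hg_def
    have hgval : ∀ (lv : ℕ) (h : lv < 3),
        g ⟨lv, h⟩ = if lv = 0 then base else if lv = 1 then j else i :=
      fun lv h => rfl
    have hginj : Function.Injective g := by
      rintro ⟨lv, hlv⟩ ⟨lv', hlv'⟩ he
      rw [hgval, hgval] at he
      apply Fin.ext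
      simp only
      split_ifs at he <;> omega
    set y : ℕ → ℝ := fun k => if k = j then -fi else if k = i then fj
      else if k = base then α + 1 else 0 with hy_def
    have hyj : y j = -fi := by simp [hy_def]
    have hyi : y i = fj := by simp [hy_def, hij]
    have hybase : y base = α + 1 := by
      have e1 : base ≠ j := by omega
      have e2 : base ≠ i := by omega
      simp [hy_def, e1, e2]
    have hcond := deriv_cond w hmono hwnn p hp 3 g hginj y z
      (by
        intro k hk
        have h0 := hk ⟨0, by omega⟩
        have h1 := hk ⟨1, by omega⟩
        have h2 := hk ⟨2, by omega⟩
        rw [hgval] at h0 h1 h2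
        simp only [if_pos rfl] at h0
        rw [if_neg (by omega : ¬ (1:ℕ) = 0), if_pos rfl] at h1
        rw [if_neg (by omega : ¬ (2:ℕ) = 0), if_neg (by omega : ¬ (2:ℕ) = 1)] at h2
        have e1 : k ≠ j := Ne.symm h1
        have e2 : k ≠ i := Ne.symm h2
        have e3 : k ≠ base := Ne.symm h0
        simp [hy_def, e1, e2, e3])
      (by
        intro k hk
        have h1 := hk ⟨1, by omega⟩
        have h2 := hk ⟨2, by omega⟩
        rw [hgval] at h1 h2
        rw [if_neg (by omega : ¬ (1:ℕ) = 0), if_pos rfl] at h1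
        rw [if_neg (by omega : ¬ (2:ℕ) = 0), if_neg (by omega : ¬ (2:ℕ) = 1)] at h2
        exact hzk k (Ne.symm h2) (Ne.symm h1))
      (by
        rintro ⟨lv, hlv⟩
        rw [hgval]
        by_cases h0 : lv = 0
        · rw [if_pos h0, hybase]
          linarith
        · by_cases h1 : lv = 1
          · rw [if_neg h0, if_pos h1, hyj]
            exact neg_ne_zero.mpr hfi
          · rw [if_neg h0, if_neg h1, hyi]
            exact hfj)
      (by
        intro l h
        rw [hgval, hgval]
        have e1 : (if (1:ℕ) = 0 then base else if (1:ℕ) = 1 then j else i) = j := by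
          norm_num
        have e2 : (if (0:ℕ) = 0 then base else if (0:ℕ) = 1 then j else i) = base := by
          norm_num
        have e3 : (if (2:ℕ) = 0 then base else if (2:ℕ) = 1 then j else i) = i := by
          norm_num
        have : l = 0 ∨ l = 1 := by omega
        rcases this with h0 | h0 <;> subst h0
        · rw [show (0:ℕ)+1 = 1 from rfl, e1, e2, hyj, hybase, abs_neg,
            abs_of_pos (by linarith : (0:ℝ) < α + 1), ← hα_def]
          linarith
        · rw [show (1:ℕ)+1 = 2 from rfl, e3, e1, hyi, hyj, abs_neg]
          exact hαβ)
      (by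
        intro t
        apply hstar y
        · apply lorentz_fin w p hp0 hmono hw0 y (Finset.range (base + 1))
          intro k hk
          rw [Finset.mem_range] at hk
          have e1 : k ≠ j := by omega
          have e2 : k ≠ i := by omega
          have e3 : k ≠ base := by omega
          simp [hy_def, e1, e2, e3]
        · rw [hyi, hyj]
          ring)
    rw [Fin.sum_univ_three] at hcond
    have hg0 : g 0 = base := by
      rw [show (0 : Fin 3) = ⟨0, by omega⟩ from rfl, hgval]; norm_num
    have hg1 : g 1 = j := by
      rw [show (1 : Fin 3) = ⟨1, by omega⟩ from rfl, hgval]; norm_num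
    have hg2 : g 2 = i := by
      rw [show (2 : Fin 3) = ⟨2, by omega⟩ from rfl, hgval]; norm_num
    rw [hg0, hg1, hg2, hyj, hyi] at hcond
    have hzbase : z base = 0 := hzk base (by omega) (by omega)
    rw [hzbase, mul_zero, mul_zero] at hcond
    rw [abs_neg, Real.sign_neg] at hcond
    have hc2 : ((2 : Fin 3) : ℕ) = 2 := rfl
    have hc1 : ((1 : Fin 3) : ℕ) = 1 := rfl
    rw [hc1, hc2, ← hα_def, ← hβ_def] at hcond
    rw [hX_def, hY_def]
    linarith [hcond]
  -- final algebra
  have hsfj : Real.sign fj ≠ 0 := by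
    rcases hfj.lt_or_gt with h | h
    · rw [Real.sign_of_neg h]; norm_num
    · rw [Real.sign_of_pos h]; norm_num
  have hsfi : Real.sign fi ≠ 0 := by
    rcases hfi.lt_or_gt with h | h
    · rw [Real.sign_of_neg h]; norm_num
    · rw [Real.sign_of_pos h]; norm_num
  have hαp : α ^ (p-1) ≠ 0 := (Real.rpow_pos_of_pos hαpos _).ne'
  have hXne : X ≠ 0 := by
    intro hX0
    have h1 : p * β ^ (p-1) * Real.sign fj ≠ 0 :=
      mul_ne_zero (mul_ne_zero hp0.ne' hβp) hsfj
    have hzi : z i = 0 := by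
      rcases mul_eq_zero.mp (hX_def ▸ hX0) with h | h
      · exact absurd h h1
      · exact h
    have h2 := Em 0
    rw [hX0, mul_zero, hw0, one_mul] at h2
    have hzj : z j = 0 := by
      have h3 : p * α ^ (p-1) * Real.sign fi ≠ 0 :=
        mul_ne_zero (mul_ne_zero hp0.ne' hαp) hsfi
      rcases mul_eq_zero.mp (hY_def ▸ h2.symm) with h | h
      · exact absurd h h3
      · exact h
    rw [hzi, hzj] at hfz
    norm_num at hfz
  have hw1 : ∀ m : ℕ, w (m+1) = w 1 := by
    intro m
    have h1 := Em m
    have h2 := Em 0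
    have h3 : w (m+1) * X = w 1 * X := by rw [h1, ← h2]
    exact mul_right_cancel₀ hXne h3
  have hXY : X = Y := by
    have h3 := Ebig
    rw [hw1 1] at h3
    exact mul_left_cancel₀ (hpos 1).ne' h3
  have hw10 : w 1 = w 0 := by
    have h2 := Em 0
    rw [← hXY] at h2
    exact mul_right_cancel₀ hXne h2
  intro k
  cases k with
  | zero => exact hw0
  | succ n => rw [hw1 n, hw10, hw0]

/-- In a strictly monotone Lorentz space, if `ker(fᵢ eᵢ* + fⱼ eⱼ*)` is the
range of a norm-one projection, then `|fᵢ| = |fⱼ|` or all weights equal `1`. -/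
theorem stmt13 (p : ℝ) (hp : 1 < p)
    (w : ℕ → ℝ) (hmono : Antitone w) (hw0 : w 0 = 1) (hpos : ∀ n, 0 < w n)
    (i j : ℕ) (hij : i ≠ j) (fi fj : ℝ) (hfi : fi ≠ 0) (hfj : fj ≠ 0)
    (P : (ℕ → ℝ) →ₗ[ℝ] (ℕ → ℝ))
    (hinto : ∀ x : ℕ → ℝ, lorentzSum w p x ≠ ⊤ → fi * P x i + fj * P x j = 0)
    (hfix : ∀ x : ℕ → ℝ, lorentzSum w p x ≠ ⊤ → fi * x i + fj * x j = 0 → P x = x)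
    (hcontr : ∀ x, lorentzSum w p (P x) ≤ lorentzSum w p x) :
    |fi| = |fj| ∨ ∀ k, w k = 1 := by
  rcases lt_trichotomy |fi| |fj| with h | h | h
  · right
    exact key_lemma p hp w hmono hw0 hpos j i hij.symm fj fi hfj hfi P
      (fun x hx => by linarith [hinto x hx])
      (fun x hx hk => hfix x hx (by linarith)) hcontr h
  · left; exact h
  · right
    exact key_lemma p hp w hmono hw0 hpos i j hij fi fj hfi hfj P hinto hfix hcontr h
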